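/- Well-specified ERM bound: In the setting above, if additionally the ground truth Y ∈ F, then with probability at least 1 − δ the ERM Ŷ satisfies ∑_v Pr(Ŷ_v ≠ Z_v) − min_{Y'∈F} ∑_v Pr(Y'_v ≠ Z_v) ≤ (4/3 + 1/ε)·log(|F|/δ), where ε = 1/2 − q. -/

import Mathlib

open Finset

/-- Probability weight of a vertex-noise configuration `g`: each coordinate is flipped
independently with probability `q`. -/
def vwt {V : Type*} [Fintype V] (q : ℝ) (g : V → Bool) : ℝ :=
  ∏ u : V, (if g u then q else 1 - q)

/-- Noisy vertex observations determined by ground truth `Y` and noise `g`. -/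
def Zof {V : Type*} (Y : V → ℤˣ) (g : V → Bool) : V → ℤˣ :=
  fun v => (if g v then -1 else 1) * Y v

/-- The (true) risk `∑_v Pr(Y'_v ≠ Z_v)` of a labeling `Y'` under vertex noise rate `q`. -/
def risk {V : Type*} [Fintype V] [DecidableEq V] (q : ℝ) (Y Y' : V → ℤˣ) : ℝ :=
  ∑ v : V, ∑ g : V → Bool, vwt q g * (if Y' v ≠ Zof Y g v then 1 else 0)

section Aux
variable {V : Type*} [Fintype V] [DecidableEq V]

lemma master (h : V → Bool → ℝ) :
    ∑ g : V → Bool, ∏ u, h u (g u) = ∏ u, (h u true + h u false) := by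
  rw [← Fintype.prod_sum]
  simp [Fintype.sum_bool]

lemma units_ne_iff (a b : ℤˣ) : a ≠ b ↔ a = -b := by
  rcases Int.units_eq_one_or a with ha|ha <;> rcases Int.units_eq_one_or b with hb|hb <;>
    subst ha <;> subst hb <;> decide

lemma units_ne_neg_iff (a b : ℤˣ) : a ≠ -1 * b ↔ a = b := by
  rcases Int.units_eq_one_or a with ha|ha <;> rcases Int.units_eq_one_or b with hb|hb <;>
    subst ha <;> subst hb <;> decide

omit [DecidableEq V] in
lemma vwt_nonneg {q : ℝ} (h0 : 0 ≤ q) (h1 : q ≤ 1) (g : V → Bool) : 0 ≤ vwt q g :=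
  Finset.prod_nonneg fun u _ => by split <;> linarith

lemma master_mul (q : ℝ) (f : V → Bool → ℝ) :
    ∑ g : V → Bool, vwt q g * ∏ u, f u (g u)
      = ∏ u, (q * f u true + (1 - q) * f u false) := by
  have h1 : (∑ g : V → Bool, vwt q g * ∏ u, f u (g u))
      = ∑ g : V → Bool, ∏ u, (fun (u : V) (b : Bool) => (if b then q else 1 - q) * f u b) u (g u) :=
    Finset.sum_congr rfl (fun g _ => by
      show vwt q g * ∏ u, f u (g u) = ∏ u, ((if g u = true then q else 1 - q) * f u (g u))
      rw [Finset.prod_mul_distrib]; rfl)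
  refine h1.trans (Eq.trans (master (fun u b => (if b then q else 1 - q) * f u b)) ?_)
  exact Finset.prod_congr rfl fun u _ => by simp

lemma sum_vwt {q : ℝ} : ∑ g : V → Bool, vwt q g = 1 := by
  have h := master_mul (V := V) q (fun _ _ => 1)
  simpa using h

lemma inner_eq {q : ℝ} (Y Y' : V → ℤˣ) (v : V) :
    ∑ g : V → Bool, vwt q g * (if Y' v ≠ Zof Y g v then 1 else 0)
      = q + (1 - 2*q) * (if Y' v ≠ Y v then 1 else 0) := by
  have hrw : ∀ g : V → Bool, (if Y' v ≠ Zof Y g v then (1:ℝ) else 0)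
      = ∏ u, (fun (u : V) (b : Bool) =>
          if u = v then (if Y' u ≠ (if b then -1 else 1) * Y u then (1:ℝ) else 0) else 1) u (g u) := by
    intro g
    rw [Finset.prod_ite_eq' Finset.univ v
      (fun u => (if Y' u ≠ (if g u then -1 else 1) * Y u then (1:ℝ) else 0))]
    simp [Zof]
  have h1 : (∑ g : V → Bool, vwt q g * (if Y' v ≠ Zof Y g v then (1:ℝ) else 0))
      = ∑ g : V → Bool, vwt q g * ∏ u, (fun (u : V) (b : Bool) =>
          if u = v then (if Y' u ≠ (if b then -1 else 1) * Y u then (1:ℝ) else 0) else 1) u (g u) :=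
    Finset.sum_congr rfl (fun g _ => by rw [← hrw g])
  refine h1.trans (Eq.trans (master_mul q (fun (u : V) (b : Bool) =>
      if u = v then (if Y' u ≠ (if b then -1 else 1) * Y u then (1:ℝ) else 0) else 1)) ?_)
  have h2 : ∀ u : V, (q * (if u = v then (if Y' u ≠ (-1) * Y u then (1:ℝ) else 0) else 1)
        + (1 - q) * (if u = v then (if Y' u ≠ 1 * Y u then (1:ℝ) else 0) else 1))
      = if u = v then (q + (1 - 2*q) * (if Y' v ≠ Y v then 1 else 0)) else 1 := by
    intro u
    by_cases hu : u = v
    · subst hu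
      by_cases hs : Y' u = Y u
      · simp [hs, units_ne_neg_iff]
      · have h3 : Y' u = -Y u := (units_ne_iff _ _).mp hs
        simp [hs, units_ne_neg_iff, h3]
        ring
    · simp [hu]
  calc ∏ u, (q * (fun (u : V) (b : Bool) =>
          if u = v then (if Y' u ≠ (if b then -1 else 1) * Y u then (1:ℝ) else 0) else 1) u true
        + (1 - q) * (fun (u : V) (b : Bool) =>
          if u = v then (if Y' u ≠ (if b then -1 else 1) * Y u then (1:ℝ) else 0) else 1) u false)
      = ∏ u, (if u = v then (q + (1 - 2*q) * (if Y' v ≠ Y v then (1:ℝ) else 0)) else 1) :=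
        Finset.prod_congr rfl (fun u _ => h2 u)
    _ = q + (1 - 2*q) * (if Y' v ≠ Y v then 1 else 0) := by
        rw [Finset.prod_ite_eq' Finset.univ v
          (fun _ => q + (1 - 2*q) * (if Y' v ≠ Y v then (1:ℝ) else 0))]
        simp

lemma risk_eq {q : ℝ} (Y Y' : V → ℤˣ) :
    risk q Y Y' = q * (Fintype.card V) +
      (1 - 2*q) * ((univ.filter (fun v => Y' v ≠ Y v)).card : ℝ) := by
  unfold risk
  rw [Finset.sum_congr rfl (fun v _ => inner_eq Y Y' v), Finset.sum_add_distrib,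
    Finset.sum_const, ← Finset.mul_sum, Finset.sum_boole]
  simp [mul_comm]

end Aux

section Aux2
variable {V : Type*} [Fintype V] [DecidableEq V]

lemma ne_Zof_self (Y : V → ℤˣ) (g : V → Bool) (v : V) :
    (Y v ≠ Zof Y g v) ↔ g v = true := by
  unfold Zof
  cases hg : g v <;> simp [units_ne_neg_iff]

lemma eq_Zof_self (Y : V → ℤˣ) (g : V → Bool) (v : V) :
    (Y v = Zof Y g v) ↔ g v = false := by
  rw [← not_ne_iff, ne_Zof_self]
  cases g v <;> simp

lemma units_not_eq_neg (a b : ℤˣ) : ¬a = -b ↔ a = b := by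
  rcases Int.units_eq_one_or a with ha|ha <;> rcases Int.units_eq_one_or b with hb|hb <;>
    subst ha <;> subst hb <;> decide

lemma ne_Zof_iff (Y Y' : V → ℤˣ) (g : V → Bool) (v : V) :
    (Y' v ≠ Zof Y g v) ↔ (if g v then Y' v = Y v else Y' v ≠ Y v) := by
  unfold Zof
  cases hg : g v <;> simp [units_ne_neg_iff, units_not_eq_neg]

lemma event_iff (Y Y' : V → ℤˣ) (g : V → Bool) :
    ((univ.filter (fun v => Y' v ≠ Zof Y g v)).card
        ≤ (univ.filter (fun v => Y v ≠ Zof Y g v)).card)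
      ↔ ((univ.filter (fun v => Y' v ≠ Y v)).card
          ≤ 2 * ((univ.filter (fun v => Y' v ≠ Y v)).filter (fun v => g v = true)).card) := by
  have hI1 : (univ.filter (fun v => Y' v ≠ Zof Y g v)).card
      + ((univ.filter (fun v => Y' v ≠ Y v)).filter (fun v => g v = true)).card
      = (univ.filter (fun v => Y' v ≠ Y v)).card
      + (univ.filter (fun v => (Y' v = Y v ∧ g v = true))).card := by
    rw [Finset.filter_filter]
    simp only [Finset.card_filter]
    rw [← Finset.sum_add_distrib, ← Finset.sum_add_distrib]
    refine Finset.sum_congr rfl fun v _ => ?_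
    cases hg : g v <;> by_cases hs : Y' v = Y v <;>
      simp [ne_Zof_iff Y Y' g v, ne_Zof_self Y g v, eq_Zof_self Y g v, hg, hs]
  have hI2 : (univ.filter (fun v => Y v ≠ Zof Y g v)).card
      = ((univ.filter (fun v => Y' v ≠ Y v)).filter (fun v => g v = true)).card
      + (univ.filter (fun v => (Y' v = Y v ∧ g v = true))).card := by
    rw [Finset.filter_filter]
    simp only [Finset.card_filter]
    rw [← Finset.sum_add_distrib]
    refine Finset.sum_congr rfl fun v _ => ?_
    cases hg : g v <;> by_cases hs : Y' v = Y v <;>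
      simp [ne_Zof_self Y g v, hg, hs]
  omega

lemma chernoff {q : ℝ} (hq0 : 0 ≤ q) (hq2 : q ≤ 1/2) (S : Finset V) :
    ∑ g : V → Bool, vwt q g *
        (if S.card ≤ 2 * (S.filter (fun v => g v = true)).card then (1:ℝ) else 0)
      ≤ (2 * Real.sqrt (q * (1-q))) ^ S.card := by
  have h1q : (0:ℝ) < 1 - q := by linarith
  rcases eq_or_lt_of_le hq0 with h0 | hqpos
  · -- q = 0
    rcases S.eq_empty_or_nonempty with hS | hS
    · subst hS
      simp [sum_vwt]
    · have hk : 0 < S.card := Finset.card_pos.mpr hS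
      have hz : ∀ g : V → Bool, vwt q g *
          (if S.card ≤ 2 * (S.filter (fun v => g v = true)).card then (1:ℝ) else 0) = 0 := by
        intro g
        by_cases hex : ∃ u ∈ S, g u = true
        · obtain ⟨u, _, hu⟩ := hex
          have : vwt q g = 0 := by
            refine Finset.prod_eq_zero (Finset.mem_univ u) ?_
            rw [hu, if_pos rfl, ← h0]
          rw [this, zero_mul]
        · push_neg at hex
          have : S.filter (fun v => g v = true) = ∅ := by
            apply Finset.filter_eq_empty_iff.mpr
            intro u hu
            simp [hex u hu]
          rw [this, Finset.card_empty]
          rw [if_neg (by omega : ¬ S.card ≤ 2*0), mul_zero]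
      rw [Finset.sum_congr rfl fun g _ => hz g, Finset.sum_const, smul_zero]
      have : Real.sqrt (q * (1 - q)) = 0 := by rw [← h0]; simp
      rw [this, mul_zero, zero_pow (by omega)]
  · -- 0 < q
    set μ := Real.sqrt ((1-q)/q) with hμdef
    have hμ1 : 1 ≤ μ := Real.one_le_sqrt.mpr ((one_le_div hqpos).mpr (by linarith))
    have hμpos : (0:ℝ) < μ := lt_of_lt_of_le one_pos hμ1
    have hμsq : μ^2 = (1-q)/q := Real.sq_sqrt (by positivity)
    have hprodrw : ∀ g : V → Bool, (∏ u ∈ S, (if g u then μ^2 else 1))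
        = ∏ u, (fun (u : V) (b : Bool) => if u ∈ S then (if b then μ^2 else 1) else 1) u (g u) := by
      intro g
      rw [show (∏ u, (fun (u : V) (b : Bool) =>
          if u ∈ S then (if b then μ^2 else 1) else 1) u (g u))
        = ∏ u, (if u ∈ S then (if g u then μ^2 else 1) else 1) from rfl,
        Finset.prod_ite_mem, Finset.univ_inter]
    have step1 : (∑ g : V → Bool, vwt q g *
          (if S.card ≤ 2 * (S.filter (fun v => g v = true)).card then (1:ℝ) else 0)) * μ ^ S.card
        ≤ ∑ g : V → Bool, vwt q g * ∏ u, (fun (u : V) (b : Bool) =>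
            if u ∈ S then (if b then μ^2 else 1) else 1) u (g u) := by
      rw [Finset.sum_mul]
      refine Finset.sum_le_sum fun g _ => ?_
      rw [← hprodrw g]
      have hvw : 0 ≤ vwt q g := vwt_nonneg hq0 (by linarith) g
      have hprodpos : (0:ℝ) ≤ ∏ u ∈ S, (if g u then μ^2 else 1) :=
        Finset.prod_nonneg fun u _ => by split <;> positivity
      by_cases hc : S.card ≤ 2 * (S.filter (fun v => g v = true)).card
      · rw [if_pos hc, mul_one]
        refine mul_le_mul_of_nonneg_left ?_ hvw
        have hps : ∏ u ∈ S, (if g u then μ^2 else 1)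
            = μ ^ (2 * (S.filter (fun v => g v = true)).card) := by
          rw [pow_mul, ← Finset.prod_const, Finset.prod_filter]
        rw [hps]
        exact pow_le_pow_right₀ hμ1 hc
      · rw [if_neg hc, mul_zero, zero_mul]
        exact mul_nonneg hvw hprodpos
    have step2 : (∑ g : V → Bool, vwt q g * ∏ u, (fun (u : V) (b : Bool) =>
          if u ∈ S then (if b then μ^2 else 1) else 1) u (g u)) = (2*(1-q)) ^ S.card := by
      refine (master_mul q (fun (u : V) (b : Bool) =>
          if u ∈ S then (if b then μ^2 else 1) else 1)).trans ?_
      have : ∀ u : V, (q * (if u ∈ S then μ^2 else 1) + (1 - q) * (if u ∈ S then (1:ℝ) else 1))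
          = if u ∈ S then 2*(1-q) else 1 := by
        intro u
        by_cases hu : u ∈ S
        · rw [if_pos hu, if_pos hu, if_pos hu, hμsq]
          field_simp
          ring
        · simp [hu]
      rw [show (∏ u, (q * ((fun (u : V) (b : Bool) =>
            if u ∈ S then (if b then μ^2 else 1) else 1) u true)
          + (1 - q) * ((fun (u : V) (b : Bool) =>
            if u ∈ S then (if b then μ^2 else 1) else 1) u false)))
          = ∏ u, (q * (if u ∈ S then μ^2 else 1) + (1 - q) * (if u ∈ S then (1:ℝ) else 1)) from rfl,
        Finset.prod_congr rfl fun u _ => this u, Finset.prod_ite_mem, Finset.univ_inter,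
        Finset.prod_const]
    have key : (2 * Real.sqrt (q * (1-q))) * μ = 2*(1-q) := by
      rw [hμdef, mul_assoc, ← Real.sqrt_mul (by positivity)]
      have : q * (1-q) * ((1-q)/q) = (1-q)^2 := by field_simp
      rw [this, Real.sqrt_sq h1q.le]
    have final : (∑ g : V → Bool, vwt q g *
          (if S.card ≤ 2 * (S.filter (fun v => g v = true)).card then (1:ℝ) else 0)) * μ ^ S.card
        ≤ (2 * Real.sqrt (q * (1-q))) ^ S.card * μ ^ S.card := by
      rw [← mul_pow, key]
      exact step1.trans (le_of_eq step2)
    exact le_of_mul_le_mul_right final (pow_pos hμpos _)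

lemma tail {ε δ : ℝ} {N : ℕ} (hε : 0 < ε) (hε2 : ε ≤ 1/2) (hδ : 0 < δ) (hN : 1 ≤ N)
    (hL : 0 ≤ Real.log (N/δ)) (k : ℕ)
    (hk : (4/3 + 1/ε) * Real.log (N/δ) < 2*ε*k) :
    (2 * Real.sqrt ((1/2-ε) * (1-(1/2-ε)))) ^ k ≤ δ / N := by
  set L := Real.log (N/δ) with hLdef
  have hNpos : (0:ℝ) < N := by exact_mod_cast hN
  have hdn : δ / N = Real.exp (-L) := by
    rw [hLdef, ← Real.log_inv, Real.exp_log (by positivity)]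
    rw [inv_div]
  set r := 2 * Real.sqrt ((1/2-ε) * (1-(1/2-ε))) with hrdef
  have hr0 : (0:ℝ) ≤ r := by positivity
  have hr2 : r^2 = 1 - 4*ε^2 := by
    have hnn : (0:ℝ) ≤ (1/2-ε)*(1-(1/2-ε)) := mul_nonneg (by linarith) (by linarith)
    rw [hrdef, mul_pow, Real.sq_sqrt hnn]
    ring
  have hk1 : 1 ≤ k := by
    rcases Nat.eq_zero_or_pos k with h | h
    · exfalso
      subst h
      have h1 : (0:ℝ) ≤ (4/3 + ε⁻¹) * L := mul_nonneg (by positivity) hL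
      simp at hk
      linarith
    · exact h
  rcases eq_or_lt_of_le hr0 with h0 | hrpos
  · rw [← h0, zero_pow (by omega)]
    positivity
  · have hr2pos : (0:ℝ) < 1 - 4*ε^2 := by rw [← hr2]; positivity
    rw [hdn]
    have hlogr : Real.log r ≤ -(2*ε^2) := by
      have h1 : Real.log r = Real.log (r^2) / 2 := by
        rw [Real.log_pow]
        push_cast
        ring
      have h2 := Real.log_le_sub_one_of_pos hr2pos
      rw [h1, hr2]
      nlinarith
    have hkL : L ≤ 2*ε^2*k := by
      have h2 : ε * ((4/3+1/ε)*L) = (4*ε/3+1)*L := by field_simp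
      have h3 : ε * ((4/3+1/ε)*L) < ε * (2*ε*k) := by
        exact mul_lt_mul_of_pos_left hk hε
      have h4 : L ≤ (4*ε/3+1)*L := le_mul_of_one_le_left hL (by linarith)
      nlinarith
    calc r ^ k = Real.exp (k * Real.log r) := by
          rw [← Real.log_pow, Real.exp_log (pow_pos hrpos k)]
      _ ≤ Real.exp (-L) := by
          apply Real.exp_le_exp.mpr
          have : (k:ℝ) * Real.log r ≤ (k:ℝ) * (-(2*ε^2)) :=
            mul_le_mul_of_nonneg_left hlogr (by positivity)
          have hk2 : (k:ℝ) * (-(2*ε^2)) = -(2*ε^2*k) := by ring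
          linarith [this, hkL]

end Aux2

set_option maxHeartbeats 1000000 in
-- Well-specified ERM bound: if the ground truth `Y ∈ F`, then with probability at least
-- `1 − δ` the ERM `Ŷ` satisfies
-- `∑_v Pr(Ŷ_v ≠ Z_v) − min_{Y'∈F} ∑_v Pr(Y'_v ≠ Z_v) ≤ (4/3 + 1/ε) log(|F|/δ)` with `ε = 1/2 − q`.
open Classical in
theorem stmt10 {V : Type*} [Fintype V] [DecidableEq V]
    (q δ ε : ℝ) (hq0 : 0 ≤ q) (hq : q = 1/2 - ε) (hε : 0 < ε)
    (hδ : 0 < δ) (hδ1 : δ ≤ 1)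
    (Y : V → ℤˣ) (F : Finset (V → ℤˣ)) (hF : F.Nonempty) (hYF : Y ∈ F)
    (sel : (V → ℤˣ) → (V → ℤˣ))
    (hselF : ∀ Z : V → ℤˣ, sel Z ∈ F)
    (hselERM : ∀ Z : V → ℤˣ, ∀ Y' ∈ F,
      (Finset.univ.filter (fun v => sel Z v ≠ Z v)).card
        ≤ (Finset.univ.filter (fun v => Y' v ≠ Z v)).card) :
    1 - δ ≤ ∑ g : V → Bool, vwt q g *
        (if risk q Y (sel (Zof Y g)) - F.inf' hF (fun Y' => risk q Y Y')
              ≤ (4/3 + 1/ε) * Real.log (F.card / δ)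
          then 1 else 0) := by
  classical
  have hε2 : ε ≤ 1/2 := by rw [hq] at hq0; linarith
  have hq1 : q ≤ 1 := by rw [hq]; linarith
  have hq12 : q ≤ 1/2 := by rw [hq]; linarith
  have h2q : 1 - 2*q = 2*ε := by rw [hq]; ring
  have hN1 : 1 ≤ F.card := Finset.card_pos.mpr hF
  have hNpos : (0:ℝ) < (F.card : ℝ) := by exact_mod_cast Finset.card_pos.mpr hF
  have hL : 0 ≤ Real.log ((F.card : ℝ) / δ) :=
    Real.log_nonneg ((one_le_div hδ).mpr (hδ1.trans (by exact_mod_cast hN1)))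
  set Bnd := (4/3 + 1/ε) * Real.log ((F.card : ℝ) / δ) with hBnddef
  have hinf : F.inf' hF (fun Y' => risk q Y Y') = q * (Fintype.card V) := by
    apply le_antisymm
    · have h := Finset.inf'_le (f := fun Y' => risk q Y Y') hYF
      rw [risk_eq] at h
      simp at h; exact h
    · refine Finset.le_inf' _ _ fun Y' hY' => ?_
      rw [risk_eq]
      have h0 : (0:ℝ) ≤ (1 - 2*q) * ((univ.filter (fun v => Y' v ≠ Y v)).card : ℝ) := by
        rw [h2q]; positivity
      linarith
  have hPsplit : ∀ g : V → Bool, vwt q g *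
      (if risk q Y (sel (Zof Y g)) - F.inf' hF (fun Y' => risk q Y Y') ≤ Bnd then (1:ℝ) else 0)
      = vwt q g - vwt q g *
        (if risk q Y (sel (Zof Y g)) - F.inf' hF (fun Y' => risk q Y Y') ≤ Bnd then (0:ℝ) else 1) :=
    fun g => by split <;> ring
  rw [Finset.sum_congr rfl (fun g _ => hPsplit g), Finset.sum_sub_distrib, sum_vwt]
  have hbad : ∑ g : V → Bool, vwt q g *
      (if risk q Y (sel (Zof Y g)) - F.inf' hF (fun Y' => risk q Y Y') ≤ Bnd then (0:ℝ) else 1)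
      ≤ δ := by
    have hbound : ∀ g : V → Bool,
        (if risk q Y (sel (Zof Y g)) - F.inf' hF (fun Y' => risk q Y Y') ≤ Bnd then (0:ℝ) else 1)
        ≤ ∑ Y' ∈ F, (if (Bnd < (1-2*q) * (((univ.filter (fun v => Y' v ≠ Y v)).card : ℝ))
            ∧ (univ.filter (fun v => Y' v ≠ Zof Y g v)).card
                ≤ (univ.filter (fun v => Y v ≠ Zof Y g v)).card)
          then (1:ℝ) else 0) := by
      intro g
      by_cases hP : risk q Y (sel (Zof Y g)) - F.inf' hF (fun Y' => risk q Y Y') ≤ Bnd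
      · rw [if_pos hP]
        exact Finset.sum_nonneg fun Y' _ => by beta_reduce; split <;> norm_num
      · rw [if_neg hP]
        have hmem := hselF (Zof Y g)
        have hterm : (if (Bnd < (1-2*q) *
              (((univ.filter (fun v => sel (Zof Y g) v ≠ Y v)).card : ℝ))
            ∧ (univ.filter (fun v => sel (Zof Y g) v ≠ Zof Y g v)).card
                ≤ (univ.filter (fun v => Y v ≠ Zof Y g v)).card)
          then (1:ℝ) else 0) = 1 := by
          rw [if_pos]
          constructor
          · push_neg at hP
            rw [hinf, risk_eq] at hP
            linarith
          · exact hselERM (Zof Y g) Y hYF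
        have h5 := Finset.single_le_sum (f := fun Y' => (if (Bnd < (1-2*q) *
              (((univ.filter (fun v => Y' v ≠ Y v)).card : ℝ))
            ∧ (univ.filter (fun v => Y' v ≠ Zof Y g v)).card
                ≤ (univ.filter (fun v => Y v ≠ Zof Y g v)).card)
          then (1:ℝ) else 0)) (fun Y' _ => by beta_reduce; split <;> norm_num) hmem
        rw [hterm] at h5
        exact h5
    have hkey : ∀ Y' ∈ F, (∑ g : V → Bool, vwt q g *
        (if (Bnd < (1-2*q) * (((univ.filter (fun v => Y' v ≠ Y v)).card : ℝ))
            ∧ (univ.filter (fun v => Y' v ≠ Zof Y g v)).card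
                ≤ (univ.filter (fun v => Y v ≠ Zof Y g v)).card)
          then (1:ℝ) else 0)) ≤ δ / F.card := by
      intro Y' hY'
      by_cases hd : Bnd < (1-2*q) * (((univ.filter (fun v => Y' v ≠ Y v)).card : ℝ))
      · set S := univ.filter (fun v => Y' v ≠ Y v) with hSdef
        calc (∑ g : V → Bool, vwt q g *
            (if (Bnd < (1-2*q) * ((S.card : ℝ))
                ∧ (univ.filter (fun v => Y' v ≠ Zof Y g v)).card
                    ≤ (univ.filter (fun v => Y v ≠ Zof Y g v)).card)
              then (1:ℝ) else 0))
            ≤ ∑ g : V → Bool, vwt q g *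
              (if S.card ≤ 2 * (S.filter (fun v => g v = true)).card then (1:ℝ) else 0) := by
              refine Finset.sum_le_sum fun g _ => ?_
              refine mul_le_mul_of_nonneg_left ?_ (vwt_nonneg hq0 hq1 g)
              split_ifs with h1 h2
              · norm_num
              · exact absurd ((event_iff Y Y' g).mp h1.2) h2
              · norm_num
              · norm_num
          _ ≤ (2 * Real.sqrt (q * (1-q))) ^ S.card := chernoff hq0 hq12 S
          _ ≤ δ / F.card := by
              have hk : (4/3 + 1/ε) * Real.log ((F.card : ℝ)/δ) < 2*ε*S.card := by
                rw [h2q] at hd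
                exact hd
              have := tail hε hε2 hδ hN1 hL S.card hk
              rw [hq]
              exact this
      · have hz : ∀ g : V → Bool, (if (Bnd < (1-2*q) *
            (((univ.filter (fun v => Y' v ≠ Y v)).card : ℝ))
            ∧ (univ.filter (fun v => Y' v ≠ Zof Y g v)).card
                ≤ (univ.filter (fun v => Y v ≠ Zof Y g v)).card)
          then (1:ℝ) else 0) = 0 := fun g => if_neg (fun hcon => hd hcon.1)
        rw [Finset.sum_congr rfl fun g _ => by rw [hz g]]
        simp only [mul_zero, Finset.sum_const, smul_zero]
        positivity
    calc ∑ g : V → Bool, vwt q g *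
        (if risk q Y (sel (Zof Y g)) - F.inf' hF (fun Y' => risk q Y Y') ≤ Bnd then (0:ℝ) else 1)
        ≤ ∑ g : V → Bool, vwt q g * ∑ Y' ∈ F,
            (if (Bnd < (1-2*q) * (((univ.filter (fun v => Y' v ≠ Y v)).card : ℝ))
              ∧ (univ.filter (fun v => Y' v ≠ Zof Y g v)).card
                  ≤ (univ.filter (fun v => Y v ≠ Zof Y g v)).card)
            then (1:ℝ) else 0) :=
          Finset.sum_le_sum fun g _ => mul_le_mul_of_nonneg_left (hbound g) (vwt_nonneg hq0 hq1 g)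
      _ = ∑ Y' ∈ F, ∑ g : V → Bool, vwt q g *
            (if (Bnd < (1-2*q) * (((univ.filter (fun v => Y' v ≠ Y v)).card : ℝ))
              ∧ (univ.filter (fun v => Y' v ≠ Zof Y g v)).card
                  ≤ (univ.filter (fun v => Y v ≠ Zof Y g v)).card)
            then (1:ℝ) else 0) := by
          rw [Finset.sum_congr rfl fun g _ => Finset.mul_sum _ _ _]
          exact Finset.sum_comm
      _ ≤ ∑ Y' ∈ F, δ / F.card := Finset.sum_le_sum hkey
      _ = δ := by
          rw [Finset.sum_const, nsmul_eq_mul]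
          field_simp
  linarith
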